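/- Let s ∈ ℕ and let L be an irreducible transition matrix on the finite state space {0,…,s} (L i j ≥ 0 and ∑_{j=0}^{s} L i j = 1 for every i) which is almost lower triangular, i.e. L i j = 0 whenever j > i + 1. Define, for a ∈ {0,…,s}, η a = det(Id − L_{[a+1,s]}) · ∏_{i=1}^{a} L (i−1) i, with the convention det(Id − L_{[s+1,s]}) = 1. Then η is invariant for L: for every b ∈ {0,…,s}, ∑_{a=0}^{s} η a · L a b = η b. -/

import Mathlib

noncomputable def detShift (A : ℕ → ℕ → ℝ) (k t : ℕ) : ℝ :=
  Matrix.det (Matrix.of fun r c : Fin k => A (t + r.1) (t + c.1))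

lemma detShift_congr (A : ℕ → ℕ → ℝ) {k k' : ℕ} (h : k = k') (t : ℕ) :
    detShift A k t = detShift A k' t := by subst h; rfl

lemma val_succAbove {n : ℕ} (i : Fin (n + 1)) (r : Fin n) :
    (i.succAbove r).1 = if r.1 < i.1 then r.1 else r.1 + 1 := by
  rcases Nat.lt_or_ge r.1 i.1 with h | h
  · rw [Fin.succAbove_of_castSucc_lt _ _ (by simpa [Fin.lt_iff_val_lt_val] using h)]
    simp [h]
  · rw [Fin.succAbove_of_le_castSucc _ _ (by simpa [Fin.le_iff_val_le_val] using h)]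
    simp [Nat.not_lt.mpr h]

lemma minor : ∀ (n : ℕ) (A : ℕ → ℕ → ℝ), (∀ r c, r + 1 < c → A r c = 0) → ∀ i, i ≤ n →
    Matrix.det (Matrix.of fun r c : Fin n => A (if r.1 < i then r.1 else r.1 + 1) (c.1 + 1)) =
    (∏ r ∈ Finset.range i, A r (r + 1)) * detShift A (n - i) (i + 1) := by
  intro n
  induction n with
  | zero =>
    intro A hA i hi
    obtain rfl : i = 0 := Nat.le_zero.mp hi
    simp [detShift, Matrix.det_fin_zero]
  | succ m ih =>
    intro A hA i hi
    cases i with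
    | zero =>
      simp only [Nat.not_lt_zero, if_false, Finset.range_zero, Finset.prod_empty, one_mul,
        Nat.sub_zero]
      unfold detShift
      congr 1
      ext r c
      simp [Nat.add_comm]
    | succ j =>
      have hj : j ≤ m := Nat.succ_le_succ_iff.mp hi
      set B : Matrix (Fin (m + 1)) (Fin (m + 1)) ℝ :=
        Matrix.of fun r c : Fin (m + 1) => A (if r.1 < j + 1 then r.1 else r.1 + 1) (c.1 + 1)
        with hB
      rw [Matrix.det_succ_row_zero]
      rw [Fintype.sum_eq_single (0 : Fin (m + 1)) (by
        intro c hc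
        have hc1 : 1 ≤ c.1 := by
          rcases Nat.eq_zero_or_pos c.1 with h | h
          · exact absurd (Fin.ext h) hc
          · exact h
        have : B 0 c = 0 := by
          simp only [hB, Matrix.of_apply, Fin.val_zero, Nat.zero_lt_succ, if_true]
          exact hA 0 (c.1 + 1) (by omega)
        rw [this]; ring)]
      have hB00 : B 0 0 = A 0 1 := by
        simp [hB]
      set A' : ℕ → ℕ → ℝ := fun x y => A (x + 1) (y + 1) with hA'
      have key : B.submatrix Fin.succ (Fin.succAbove 0) =
          Matrix.of fun r c : Fin m => A' (if r.1 < j then r.1 else r.1 + 1) (c.1 + 1) := by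
        rw [Fin.succAbove_zero]
        ext r c
        simp only [Matrix.submatrix_apply, hB, Matrix.of_apply, Fin.val_succ, hA']
        by_cases h : r.1 < j
        · rw [if_pos (by omega), if_pos h]
        · rw [if_neg (by omega), if_neg h]
      rw [key, ih A' (fun r c h => hA _ _ (by omega)) j hj]
      have hsh : detShift A' (m - j) (j + 1) = detShift A (m + 1 - (j + 1)) (j + 1 + 1) := by
        rw [detShift_congr A' (show m - j = m + 1 - (j+1) by omega)]
        unfold detShift
        congr 1
        ext r c
        show A (j + 1 + r.1 + 1) (j + 1 + c.1 + 1) = A (j + 1 + 1 + r.1) (j + 1 + 1 + c.1)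
        rw [show j + 1 + r.1 + 1 = j + 1 + 1 + r.1 by omega, show j + 1 + c.1 + 1 = j + 1 + 1 + c.1 by omega]
      rw [hsh, hB00, Finset.prod_range_succ']
      show ((-1:ℝ)^((0 : Fin (m+1)) : ℕ)) * A 0 1 *
        ((∏ r ∈ Finset.range j, A (r+1) (r+1+1)) * detShift A (m + 1 - (j + 1)) (j + 2)) = _
      simp only [Fin.val_zero, pow_zero, one_mul]
      ring
/-- `detOneSubI M a b = det(Id − M_{[a,b]})`, equal to `1` when `a > b`. -/
noncomputable def detOneSubI (M : ℕ → ℕ → ℝ) (a b : ℕ) : ℝ :=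
  Matrix.det (1 - Matrix.of fun i j : Fin (b + 1 - a) => M (a + i.1) (a + j.1))

lemma expand (n : ℕ) (A : ℕ → ℕ → ℝ) (hA : ∀ r c, r + 1 < c → A r c = 0) :
    detShift A (n + 1) 0 =
      ∑ i ∈ Finset.range (n + 1), (-1 : ℝ) ^ i * A i 0 *
        ((∏ r ∈ Finset.range i, A r (r + 1)) * detShift A (n - i) (i + 1)) := by
  rw [show detShift A (n + 1) 0 = (Matrix.of fun r c : Fin (n+1) => A (0 + r.1) (0 + c.1)).det from rfl]
  rw [Matrix.det_succ_column_zero]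
  rw [← Fin.sum_univ_eq_sum_range (fun i => (-1 : ℝ) ^ i * A i 0 *
        ((∏ r ∈ Finset.range i, A r (r + 1)) * detShift A (n - i) (i + 1))) (n + 1)]
  apply Finset.sum_congr rfl
  intro i _
  have h1 : (Matrix.of fun r c : Fin (n+1) => A (0 + r.1) (0 + c.1)) i 0 = A i.1 0 := by
    simp
  rw [h1]
  have h2 : ((Matrix.of fun r c : Fin (n+1) => A (0 + r.1) (0 + c.1)).submatrix
      i.succAbove Fin.succ) =
      Matrix.of fun r c : Fin n => A (if r.1 < i.1 then r.1 else r.1 + 1) (c.1 + 1) := by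
    ext r c
    simp only [Matrix.submatrix_apply, Matrix.of_apply, Fin.val_succ, Nat.zero_add]
    rw [val_succAbove]
  rw [h2, minor n A hA i.1 (by omega)]

lemma star (M : ℕ → ℕ → ℝ) (hM : ∀ r c, r + 1 < c → M r c = 0) (n b : ℕ) :
    detShift M (n + 1) b = ∑ i ∈ Finset.range (n + 1), (-1 : ℝ) ^ i * M (b + i) b *
      ((∏ r ∈ Finset.range i, M (b + r) (b + r + 1)) * detShift M (n - i) (b + i + 1)) := by
  have hsh : ∀ k t, detShift (fun r c => M (b + r) (b + c)) k t = detShift M k (b + t) := by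
    intro k t
    unfold detShift
    congr 1
    ext r c
    show M (b + (t + r.1)) (b + (t + c.1)) = M (b + t + r.1) (b + t + c.1)
    rw [show b + (t + r.1) = b + t + r.1 by omega, show b + (t + c.1) = b + t + c.1 by omega]
  have h := expand n (fun r c => M (b + r) (b + c)) (fun r c h => hM _ _ (by omega))
  simp only [hsh, Nat.add_zero, ← Nat.add_assoc] at h
  exact h
/-- Theorem 3.6: on the finite state space `{0,…,s}`, the measure
`η a = det(Id − L_{[a+1,s]}) · ∏_{i=1}^a L (i−1) i` is invariant for every irreducible
almost lower triangular transition matrix `L` on `{0,…,s}`. -/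
theorem invariant_measure_finite_almost_lower_triangular (s : ℕ) (L : ℕ → ℕ → ℝ)
    (hnn : ∀ i j, i ≤ s → j ≤ s → 0 ≤ L i j)
    (hrow : ∀ i, i ≤ s → ∑ j ∈ Finset.range (s + 1), L i j = 1)
    (hlt : ∀ i j, i ≤ s → j ≤ s → i + 1 < j → L i j = 0)
    (hirr : ∀ i j, i ≤ s → j ≤ s →
      ∃ (n : ℕ) (x : ℕ → ℕ), 0 < n ∧ x 0 = i ∧ x n = j ∧
        (∀ k, k ≤ n → x k ≤ s) ∧ ∀ k, k < n → 0 < L (x k) (x (k + 1)))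
    (η : ℕ → ℝ)
    (hη : ∀ a, η a = detOneSubI L (a + 1) s * ∏ i ∈ Finset.Icc 1 a, L (i - 1) i) :
    ∀ b ≤ s, ∑ a ∈ Finset.range (s + 1), η a * L a b = η b := by
  intro b hb
  classical
  set L' : ℕ → ℕ → ℝ := fun r c => if r ≤ s ∧ c ≤ s then L r c else 0 with hL'
  set M : ℕ → ℕ → ℝ := fun r c => (if r = c then (1:ℝ) else 0) - L' r c with hM
  have hMz : ∀ r c, r + 1 < c → M r c = 0 := by
    intro r c h
    have hne : r ≠ c := by omega
    simp only [hM, hL', if_neg hne, zero_sub, neg_eq_zero]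
    split_ifs with h2
    · exact hlt r c h2.1 h2.2 h
    · rfl
  have hD : ∀ a, a ≤ s → detOneSubI L (a + 1) s = detShift M (s - a) (a + 1) := by
    intro a ha
    have h1 : (1 - Matrix.of fun i j : Fin (s + 1 - (a + 1)) => L ((a+1) + i.1) ((a+1) + j.1)) =
        Matrix.of fun i j : Fin (s + 1 - (a + 1)) => M ((a+1) + i.1) ((a+1) + j.1) := by
      ext i j
      have hi : a + 1 + i.1 ≤ s := by have := i.2; omega
      have hj : a + 1 + j.1 ≤ s := by have := j.2; omega
      simp only [Matrix.sub_apply, Matrix.one_apply, Matrix.of_apply, hM, hL',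
        if_pos (And.intro hi hj)]
      congr 1
      by_cases h : i = j
      · subst h; simp
      · rw [if_neg h, if_neg (by intro hc; exact h (Fin.ext (by omega)))]
    rw [detOneSubI, h1]
    show detShift M (s + 1 - (a+1)) (a+1) = _
    exact detShift_congr M (by omega) _
  have hD0 : detShift M (s + 1) 0 = 0 := by
    have h1 : (Matrix.of fun r c : Fin (s + 1) => M (0 + r.1) (0 + c.1)) =
        1 - Matrix.of (fun r c : Fin (s + 1) => L r.1 c.1) := by
      ext r c
      have hrs : r.1 ≤ s := by have := r.2; omega
      have hcs : c.1 ≤ s := by have := c.2; omega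
      simp only [Matrix.of_apply, Nat.zero_add, hM, hL', if_pos (And.intro hrs hcs),
        Matrix.sub_apply, Matrix.one_apply]
      congr 1
      by_cases h : r = c
      · subst h; simp
      · rw [if_neg (by intro hc; exact h (Fin.ext hc)), if_neg h]
    show Matrix.det _ = 0
    rw [h1, ← Matrix.exists_mulVec_eq_zero_iff]
    refine ⟨fun _ => 1, ?_, ?_⟩
    · intro h
      exact one_ne_zero (congrFun h 0)
    · funext i
      have hrs : i.1 ≤ s := by have := i.2; omega
      simp only [Matrix.mulVec, dotProduct, Matrix.sub_apply, Matrix.one_apply,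
        Matrix.of_apply, mul_one, Finset.sum_sub_distrib]
      rw [Finset.sum_ite_eq Finset.univ i (fun _ => (1:ℝ))]
      rw [Fin.sum_univ_eq_sum_range (fun j => L i.1 j) (s+1), hrow i.1 hrs]
      simp
  have hQ : ∀ a, (∏ i ∈ Finset.Icc 1 a, L (i - 1) i) = ∏ r ∈ Finset.range a, L r (r + 1) := by
    intro a
    induction a with
    | zero => simp
    | succ k ihk =>
      rw [Finset.prod_Icc_succ_top (Nat.succ_le_succ (Nat.zero_le k)), ihk,
        Finset.prod_range_succ]
      simp
  have hQadd : ∀ i, (∏ r ∈ Finset.range (b + i), L r (r + 1)) =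
      (∏ r ∈ Finset.range b, L r (r + 1)) * ∏ r ∈ Finset.range i, L (b + r) (b + r + 1) := by
    intro i
    induction i with
    | zero => simp
    | succ k ihk =>
      rw [show b + (k + 1) = (b + k) + 1 from rfl, Finset.prod_range_succ, ihk,
        Finset.prod_range_succ]
      ring
  have hstar := star M hMz (s - b) b
  have hterm : ∀ i ∈ Finset.range (s - b + 1),
      (-1 : ℝ) ^ i * M (b + i) b * ((∏ r ∈ Finset.range i, M (b + r) (b + r + 1)) *
        detShift M (s - b - i) (b + i + 1)) =
      (if i = 0 then detShift M (s - b) (b + 1) else 0)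
        - L (b + i) b * ((∏ r ∈ Finset.range i, L (b + r) (b + r + 1)) *
          detShift M (s - b - i) (b + i + 1)) := by
    intro i hi
    have him : i ≤ s - b := by
      have := Finset.mem_range.mp hi; omega
    have e1 : M (b + i) b = (if i = 0 then 1 else 0) - L (b + i) b := by
      simp only [hM, hL', if_pos (And.intro (show b + i ≤ s by omega) hb)]
      congr 1
      by_cases h : i = 0
      · simp [h]
      · rw [if_neg (by omega), if_neg h]
    have e2 : (∏ r ∈ Finset.range i, M (b + r) (b + r + 1)) =
        (-1 : ℝ) ^ i * ∏ r ∈ Finset.range i, L (b + r) (b + r + 1) := by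
      have hc : ∀ r ∈ Finset.range i, M (b + r) (b + r + 1) = (-1) * L (b + r) (b + r + 1) := by
        intro r hr
        have hr' : r < i := Finset.mem_range.mp hr
        simp only [hM, hL', if_neg (show ¬ b + r = b + r + 1 by omega),
          if_pos (And.intro (show b + r ≤ s by omega) (show b + r + 1 ≤ s by omega)), zero_sub]
        ring
      rw [Finset.prod_congr rfl hc, Finset.prod_mul_distrib, Finset.prod_const,
        Finset.card_range]
    rw [e1, e2]
    have e3 : (-1 : ℝ) ^ i * (-1 : ℝ) ^ i = 1 := by
      rw [← pow_add, ← two_mul, pow_mul]; norm_num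
    by_cases h : i = 0
    · subst h
      simp
      ring
    · rw [if_neg h, if_neg h]
      have e4 : (-1:ℝ)^i * ((0:ℝ) - L (b+i) b) *
          (((-1:ℝ)^i * (∏ r ∈ Finset.range i, L (b+r) (b+r+1))) *
            detShift M (s - b - i) (b+i+1)) =
          ((-1:ℝ)^i * (-1:ℝ)^i) * (((0:ℝ) - L (b+i) b) *
            ((∏ r ∈ Finset.range i, L (b+r) (b+r+1)) * detShift M (s-b-i) (b+i+1))) := by
        ring
      rw [e4, e3, one_mul]
      ring
  have hstar' : (∑ i ∈ Finset.range (s - b + 1), L (b + i) b *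
        ((∏ r ∈ Finset.range i, L (b + r) (b + r + 1)) * detShift M (s - b - i) (b + i + 1))) =
      detShift M (s - b) (b + 1) - detShift M (s - b + 1) b := by
    rw [Finset.sum_congr rfl hterm, Finset.sum_sub_distrib] at hstar
    rw [Finset.sum_ite_eq' (Finset.range (s - b + 1)) 0
      (fun _ => detShift M (s - b) (b + 1))] at hstar
    rw [if_pos (Finset.mem_range.mpr (by omega))] at hstar
    linarith [hstar]
  have hsum1 : ∑ a ∈ Finset.range (s+1), η a * L a b =
      ∑ a ∈ Finset.range (s+1), detShift M (s - a) (a+1) *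
        ((∏ r ∈ Finset.range a, L r (r+1)) * L a b) := by
    apply Finset.sum_congr rfl
    intro a ha
    have has : a ≤ s := by have := Finset.mem_range.mp ha; omega
    rw [hη a, hD a has, hQ a]; ring
  rw [hsum1, hη b, hD b hb, hQ b]
  set f : ℕ → ℝ := fun a => detShift M (s - a) (a+1) *
    ((∏ r ∈ Finset.range a, L r (r+1)) * L a b) with hf
  rw [Finset.range_eq_Ico, ← Finset.sum_Ico_consecutive f (Nat.zero_le b)
    (show b ≤ s + 1 by omega)]
  have hpart1 : ∑ a ∈ Finset.Ico 0 b, f a =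
      detShift M (s - b + 1) b * ∏ r ∈ Finset.range b, L r (r+1) := by
    by_cases hb0 : b = 0
    · subst hb0
      simp [Nat.sub_zero, hD0]
    · obtain ⟨k, rfl⟩ : ∃ k, b = k + 1 := ⟨b - 1, by omega⟩
      rw [Finset.sum_eq_single_of_mem k (by simp [Finset.mem_Ico])]
      · show detShift M (s - k) (k+1) * ((∏ r ∈ Finset.range k, L r (r+1)) * L k (k+1)) = _
        rw [detShift_congr M (show s - k = s - (k+1) + 1 by omega) (k+1),
          Finset.prod_range_succ]
      · intro a ha hne
        have ha' : a < k + 1 := (Finset.mem_Ico.mp ha).2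
        have hz : L a (k+1) = 0 := hlt a (k+1) (by omega) hb (by omega)
        show detShift M (s - a) (a+1) * ((∏ r ∈ Finset.range a, L r (r+1)) * L a (k+1)) = 0
        rw [hz]; ring
  have hpart2 : ∑ a ∈ Finset.Ico b (s+1), f a =
      (∏ r ∈ Finset.range b, L r (r+1)) *
        (detShift M (s - b) (b+1) - detShift M (s - b + 1) b) := by
    rw [Finset.sum_Ico_eq_sum_range]
    rw [show s + 1 - b = s - b + 1 by omega]
    rw [← hstar', Finset.mul_sum]
    apply Finset.sum_congr rfl
    intro i hi
    have him : i ≤ s - b := by have := Finset.mem_range.mp hi; omega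
    show detShift M (s - (b+i)) (b+i+1) *
      ((∏ r ∈ Finset.range (b+i), L r (r+1)) * L (b+i) b) = _
    rw [hQadd i, detShift_congr M (show s - (b+i) = s - b - i by omega) (b+i+1)]
    ring
  rw [hpart1, hpart2]
  ring
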